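/- Let d ≥ 1 and let E be a d-regular graph on n vertices. Then G_E contains a cycle of length 31·d·n, namely the cycle that traverses, for i = 1,...,|E(→E)| in the order given by f, the vertices a_1^{f^{-1}(i)}, a_2^{f^{-1}(i)}, ..., a_31^{f^{-1}(i)} and then proceeds to a_1^{f^{-1}(i+1)} (cyclically); this cycle visits exactly the vertices {a_j^e : e ∈ E(→E), 1 ≤ j ≤ 31} and omits the 6n vertices b_1^v,...,b_6^v. -/

import Mathlib

open SimpleGraph

variable {V : Type*}

/-- The closed neighbourhood `N_G(S) = S ∪ {v : v adjacent to some w ∈ S}`. -/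
def closedNbhd (G : SimpleGraph V) (S : Set V) : Set V :=
  S ∪ {v | ∃ w ∈ S, G.Adj v w}

/-- `G` has maximum degree at most `d`. -/
def MaxDegLE (G : SimpleGraph V) (d : ℕ) : Prop :=
  ∀ v, (G.neighborSet v).ncard ≤ d

/-- `G` is `ε`-far from being Hamiltonian (w.r.t. the degree bound `d`):
modifying at most `ε·d·|V|` edges cannot make `G` Hamiltonian. -/
def FarFromHamiltonian [Fintype V] [DecidableEq V] (G : SimpleGraph V) (d : ℕ) (ε : ℝ) : Prop :=
  ∀ F : Finset (Sym2 V), (∀ e ∈ F, ¬ e.IsDiag) →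
    (F.card : ℝ) ≤ ε * d * (Fintype.card V) →
    ¬ (SimpleGraph.fromEdgeSet (symmDiff G.edgeSet (↑F : Set (Sym2 V)))).IsHamiltonian

/-- `G` is `δ`-locally Hamiltonian on the class `C`: for every `S` with `|S| ≤ δ·|V|`
there is a Hamiltonian `H ∈ C` (on the same vertex set, hence of the same order),
a set `T`, and an isomorphism `G[N_G(S)] ≅ H[N_H(T)]` mapping `S` onto `T`. -/
def LocallyHamiltonian [Fintype V] [DecidableEq V] (C : SimpleGraph V → Prop) (δ : ℝ)
    (G : SimpleGraph V) : Prop :=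
  ∀ S : Set V, (S.ncard : ℝ) ≤ δ * (Fintype.card V) →
    ∃ H : SimpleGraph V, C H ∧ H.IsHamiltonian ∧ ∃ T : Set V,
      ∃ φ : (SimpleGraph.induce (closedNbhd G S) G) ≃g (SimpleGraph.induce (closedNbhd H T) H),
        ∀ x : closedNbhd G S, (x : V) ∈ S ↔ ((φ x : V) ∈ T)

/-- `S` witnesses non-Hamiltonicity of `G` among graphs of maximum degree at most `d`:
no Hamiltonian graph `H` of the same order with degree bound `d` admits a set `T` and an
isomorphism `G[N_G(S)] ≅ H[N_H(T)]` mapping `S` onto `T`. -/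
def WitnessesNonHamiltonicity [Fintype V] [DecidableEq V] (G : SimpleGraph V) (d : ℕ)
    (S : Set V) : Prop :=
  ∀ H : SimpleGraph V, H.IsHamiltonian → MaxDegLE H d → ∀ T : Set V,
    ¬ ∃ φ : (SimpleGraph.induce (closedNbhd G S) G) ≃g (SimpleGraph.induce (closedNbhd H T) H),
        ∀ x : closedNbhd G S, (x : V) ∈ S ↔ ((φ x : V) ∈ T)

/-- `E` is `d`-regular. -/
def IsRegularDeg (E : SimpleGraph V) (d : ℕ) : Prop :=
  ∀ v, (E.neighborSet v).ncard = d

/-- The arcs of the directed graph `→E` obtained by replacing each edge by two arcs. -/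
abbrev Arc (E : SimpleGraph V) : Type _ := {p : V × V // E.Adj p.1 p.2}

instance arcDecPred [Fintype V] (E : SimpleGraph V) [DecidableRel E.Adj] :
    DecidablePred (fun p : V × V => E.Adj p.1 p.2) := fun p => ‹DecidableRel E.Adj› p.1 p.2

/-- The vertex set of `G_E`: 31 `a`-vertices per arc and 6 `b`-vertices per vertex. -/
abbrev GEVert (E : SimpleGraph V) : Type _ := (Arc E × Fin 31) ⊕ (V × Fin 6)

/-- For `1 ≤ j ≤ 31`, the vertex `a_j^e` of `G_E`. -/
def aV {E : SimpleGraph V} (e : Arc E) (j : ℕ) : GEVert E :=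
  Sum.inl (e, ⟨(j - 1) % 31, by omega⟩)

/-- For `1 ≤ k ≤ 6`, the vertex `b_k^v` of `G_E`. -/
def bV (E : SimpleGraph V) (v : V) (k : ℕ) : GEVert E :=
  Sum.inr (v, ⟨(k - 1) % 6, by omega⟩)

/-- Adjacency (with 1-based indices) inside the gadget `P(v_1,…,v_31)` (unsymmetrised):
`{v_i, v_{i+1}}` for `1 ≤ i ≤ 30`, `{v_j, v_{j+3}}` for `j ∈ {2,27}`, and
`{v_k, v_{k+5}}` for `k ∈ {6,12,15,21}`. -/
def gadgetRel (i j : ℕ) : Prop :=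
  (1 ≤ i ∧ i ≤ 30 ∧ j = i + 1) ∨
  ((i = 2 ∧ j = 5) ∨ (i = 27 ∧ j = 30) ∨ (i = 6 ∧ j = 11) ∨ (i = 12 ∧ j = 17) ∨
    (i = 15 ∧ j = 20) ∨ (i = 21 ∧ j = 26))

/-- The generating relation for the edges of `G_E`: the gadget edges, the cyclic edges given by
the linear order `f` on arcs, and the link edges (a link from the gadget of an arc `e = (u,v)`
to the gadget of an arc `e' = (v,w)` via `b_1^v,…,b_6^v`). -/
def GERel [Fintype V] (E : SimpleGraph V) [DecidableRel E.Adj]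
    (f : Arc E ≃ Fin (Fintype.card (Arc E))) (x y : GEVert E) : Prop :=
  (∃ (e : Arc E) (i j : ℕ), gadgetRel i j ∧ x = aV e i ∧ y = aV e j) ∨
  (∃ e e' : Arc E, (f e').val = ((f e).val + 1) % (Fintype.card (Arc E)) ∧
      x = aV e 31 ∧ y = aV e' 1) ∨
  (∃ e e' : Arc E, e.1.2 = e'.1.1 ∧
    ((x = aV e 23 ∧ y = aV e' 3) ∨ (x = aV e 18 ∧ y = aV e' 8) ∨
     (x = aV e 29 ∧ y = aV e' 9) ∨ (x = aV e 24 ∧ y = aV e' 14) ∨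
     (x = aV e' 5 ∧ y = bV E e.1.2 1) ∨ (x = bV E e.1.2 1 ∧ y = bV E e.1.2 2) ∨
     (x = bV E e.1.2 2 ∧ y = bV E e.1.2 3) ∨ (x = bV E e.1.2 3 ∧ y = aV e 23) ∨
     (x = aV e 24 ∧ y = bV E e.1.2 4) ∨ (x = bV E e.1.2 4 ∧ y = bV E e.1.2 5) ∨
     (x = bV E e.1.2 5 ∧ y = bV E e.1.2 6) ∨ (x = bV E e.1.2 6 ∧ y = aV e' 12)))

/-- The graph `G_E` of the construction. -/
def GE [Fintype V] (E : SimpleGraph V) [DecidableRel E.Adj]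
    (f : Arc E ≃ Fin (Fintype.card (Arc E))) : SimpleGraph (GEVert E) :=
  SimpleGraph.fromRel (GERel E f)

/-- The list `L` of vertices is a subpath of the closed walk `C`, i.e. it appears (forwards or
reversed) as a sequence of consecutive vertices of `C` (cyclically). -/
def IsSubpath {W : Type*} (G : SimpleGraph W) {x : W} (C : G.Walk x x) (L : List W) : Prop :=
  (∃ i : ℕ, ∀ (j : ℕ) (h : j < L.length), L.get ⟨j, h⟩ = C.getVert ((i + j) % C.length)) ∨
  (∃ i : ℕ, ∀ (j : ℕ) (h : j < L.reverse.length),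
      L.reverse.get ⟨j, h⟩ = C.getVert ((i + j) % C.length))

/-- The expansion ratio of `E` is at least `1`: every nonempty `S` with `|S| ≤ |V|/2` has at
least `|S|` boundary edges. -/
def ExpansionGeOne [Fintype V] (E : SimpleGraph V) : Prop :=
  ∀ S : Set V, S.Nonempty → 2 * S.ncard ≤ Fintype.card V →
    S.ncard ≤ {p : Sym2 V | p ∈ E.edgeSet ∧ ∃ x ∈ S, ∃ y, y ∉ S ∧ p = s(x, y)}.ncard



section Stmt7Aux

open SimpleGraph Walk

variable {W : Type*} {G : SimpleGraph W}

/-- A walk along a sequence of vertices. -/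
def walkSeg (G : SimpleGraph W) (g : ℕ → W) (s : ℕ) :
    (L : ℕ) → (∀ k, s ≤ k → k < s + L → G.Adj (g k) (g (k + 1))) → G.Walk (g s) (g (s + L))
  | 0, _ => Walk.nil
  | (L + 1), h =>
      (walkSeg G g s L (fun k h1 h2 => h k h1 (by omega))).concat (h (s + L) (by omega) (by omega))

theorem walkSeg_length (g : ℕ → W) (s L : ℕ) (h) : (walkSeg G g s L h).length = L := by
  induction L with
  | zero => rfl
  | succ L ih => simp [walkSeg, ih]

theorem walkSeg_getVert (g : ℕ → W) (s L : ℕ) (h) (i : ℕ) (hi : i ≤ L) :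
    (walkSeg G g s L h).getVert i = g (s + i) := by
  induction L generalizing i with
  | zero =>
    have : i = 0 := by omega
    subst this
    simp [walkSeg]
  | succ L ih =>
    rw [walkSeg, Walk.concat_eq_append, Walk.getVert_append, walkSeg_length]
    by_cases hlt : i < L
    · rw [if_pos hlt]
      exact ih _ _ (le_of_lt hlt)
    · rw [if_neg hlt]
      rcases (by omega : i = L ∨ i = L + 1) with rfl | rfl
      · simp [Walk.getVert_zero]
      · have h1 : L + 1 - L = 1 := by omega
        rw [h1]
        rfl

theorem walkSeg_support (g : ℕ → W) (s L : ℕ) (h) :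
    (walkSeg G g s L h).support = (List.range (L + 1)).map (fun i => g (s + i)) := by
  induction L with
  | zero => rfl
  | succ L ih =>
    simp only [walkSeg, Walk.support_concat, ih, List.range_succ, List.map_append,
      List.concat_eq_append, List.map_cons, List.map_nil]

theorem walkSeg_edges (g : ℕ → W) (s L : ℕ) (h) :
    (walkSeg G g s L h).edges = (List.range L).map (fun i => s(g (s + i), g (s + i + 1))) := by
  induction L with
  | zero => rfl
  | succ L ih =>
    simp only [walkSeg, Walk.edges_concat, ih, List.range_succ, List.map_append,
      List.concat_eq_append, List.map_cons, List.map_nil]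
    rfl

theorem getVert_copy' {u v u' v' : W} (p : G.Walk u v) (hu : u = u') (hv : v = v') (i : ℕ) :
    (p.copy hu hv).getVert i = p.getVert i := by subst_vars; rfl

end Stmt7Aux

section Stmt7Main

variable [Fintype V] (E : SimpleGraph V) [DecidableRel E.Adj]
  (f : Arc E ≃ Fin (Fintype.card (Arc E))) (hm : 0 < Fintype.card (Arc E))

/-- The vertex sequence of the long cycle. -/
def tfun (k : ℕ) : GEVert E :=
  Sum.inl (f.symm ⟨k / 31 % Fintype.card (Arc E), Nat.mod_lt _ hm⟩,
    ⟨k % 31, Nat.mod_lt _ (by omega)⟩)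

theorem tfun_eq (k a b : ℕ) (ha : a < Fintype.card (Arc E)) (hb : b < 31)
    (h1 : k / 31 % Fintype.card (Arc E) = a) (h2 : k % 31 = b) :
    tfun E f hm k = Sum.inl (f.symm ⟨a, ha⟩, ⟨b, hb⟩) := by
  subst h1; subst h2; rfl

set_option linter.unusedSectionVars false in
theorem aV_eq {E : SimpleGraph V} (e : Arc E) (j b : ℕ) (hb : b < 31)
    (hjb : (j - 1) % 31 = b) : aV e j = (Sum.inl (e, ⟨b, hb⟩) : GEVert E) := by
  subst hjb; rfl

theorem tfun_inj (x y : ℕ) (hx : x < 31 * Fintype.card (Arc E))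
    (hy : y < 31 * Fintype.card (Arc E)) (hxy : tfun E f hm x = tfun E f hm y) : x = y := by
  simp only [tfun, Sum.inl.injEq, Prod.mk.injEq] at hxy
  obtain ⟨h1, h2⟩ := hxy
  have h1' := f.symm.injective h1
  rw [Fin.mk.injEq] at h1' h2
  have hxm : x / 31 < Fintype.card (Arc E) := Nat.div_lt_of_lt_mul hx
  have hym : y / 31 < Fintype.card (Arc E) := Nat.div_lt_of_lt_mul hy
  rw [Nat.mod_eq_of_lt hxm, Nat.mod_eq_of_lt hym] at h1'
  omega

theorem tfun_adj (k : ℕ) : (GE E f).Adj (tfun E f hm k) (tfun E f hm (k + 1)) := by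
  rw [GE, SimpleGraph.fromRel_adj]
  have hk31 : k % 31 < 31 := Nat.mod_lt _ (by omega)
  by_cases h30 : k % 31 < 30
  · -- gadget consecutive edge
    have hd : (k + 1) / 31 = k / 31 := by omega
    have hmo : (k + 1) % 31 = k % 31 + 1 := by omega
    have ht1 : tfun E f hm k = Sum.inl (f.symm ⟨k / 31 % Fintype.card (Arc E),
        Nat.mod_lt _ hm⟩, ⟨k % 31, by omega⟩) :=
      tfun_eq E f hm _ _ _ (Nat.mod_lt _ hm) (by omega) rfl rfl
    have ht2 : tfun E f hm (k + 1) = Sum.inl (f.symm ⟨k / 31 % Fintype.card (Arc E),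
        Nat.mod_lt _ hm⟩, ⟨k % 31 + 1, by omega⟩) :=
      tfun_eq E f hm _ _ _ (Nat.mod_lt _ hm) (by omega) (by rw [hd]) (by rw [hmo])
    constructor
    · rw [ht1, ht2]
      simp only [ne_eq, Sum.inl.injEq, Prod.mk.injEq, Fin.mk.injEq]
      omega
    · left; left
      refine ⟨f.symm ⟨k / 31 % Fintype.card (Arc E), Nat.mod_lt _ hm⟩,
        k % 31 + 1, k % 31 + 2, ?_, ?_, ?_⟩
      · exact Or.inl ⟨by omega, by omega, rfl⟩
      · rw [ht1, aV_eq _ (k % 31 + 1) (k % 31) (by omega) (by omega)]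
      · rw [ht2, aV_eq _ (k % 31 + 2) (k % 31 + 1) (by omega) (by omega)]
  · -- link between consecutive gadgets
    have h30' : k % 31 = 30 := by omega
    have hd : (k + 1) / 31 = k / 31 + 1 := by omega
    have hmo : (k + 1) % 31 = 0 := by omega
    have ht1 : tfun E f hm k = Sum.inl (f.symm ⟨k / 31 % Fintype.card (Arc E),
        Nat.mod_lt _ hm⟩, ⟨30, by omega⟩) :=
      tfun_eq E f hm _ _ _ (Nat.mod_lt _ hm) (by omega) rfl h30'
    have ht2 : tfun E f hm (k + 1) = Sum.inl (f.symm ⟨(k / 31 + 1) % Fintype.card (Arc E),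
        Nat.mod_lt _ hm⟩, ⟨0, by omega⟩) :=
      tfun_eq E f hm _ _ _ (Nat.mod_lt _ hm) (by omega) (by rw [hd]) hmo
    constructor
    · rw [ht1, ht2]
      simp only [ne_eq, Sum.inl.injEq, Prod.mk.injEq, Fin.mk.injEq]
      omega
    · left; right; left
      refine ⟨f.symm ⟨k / 31 % Fintype.card (Arc E), Nat.mod_lt _ hm⟩,
        f.symm ⟨(k / 31 + 1) % Fintype.card (Arc E), Nat.mod_lt _ hm⟩, ?_, ?_, ?_⟩
      · rw [Equiv.apply_symm_apply, Equiv.apply_symm_apply]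
        exact (Nat.mod_add_mod _ _ _).symm
      · rw [ht1, aV_eq _ 31 30 (by omega) (by omega)]
      · rw [ht2, aV_eq _ 1 0 (by omega) (by omega)]

end Stmt7Main

/-- For `d ≥ 1` and a `d`-regular base graph `E` on `n ≥ 1` vertices, `G_E`
contains a cycle of length `31·d·n` which, for `i = 0, 1, …` in the cyclic order given by `f`,
traverses the vertices `a_1^{f⁻¹(i)}, a_2^{f⁻¹(i)}, …, a_31^{f⁻¹(i)}` and then proceeds to
`a_1^{f⁻¹(i+1)}`; it visits exactly the `a`-vertices and omits the `6n` `b`-vertices. -/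
theorem stmt7 {V : Type*} [Fintype V] [DecidableEq V] [Nonempty V] (E : SimpleGraph V)
    [DecidableRel E.Adj] (d : ℕ) (hd : 1 ≤ d) (hreg : IsRegularDeg E d)
    (f : Arc E ≃ Fin (Fintype.card (Arc E))) :
    ∃ (x : GEVert E) (C : (GE E f).Walk x x), C.IsCycle ∧
      C.length = 31 * d * Fintype.card V ∧
      (∀ (i : Fin (Fintype.card (Arc E))) (j : ℕ), j < 31 →
        C.getVert (31 * (i : ℕ) + j) = aV (f.symm i) (j + 1)) ∧
      (∀ y : GEVert E, y ∈ C.support ↔ ∃ p : Arc E × Fin 31, y = Sum.inl p) := by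
  classical
  have hcard : Fintype.card (Arc E) = d * Fintype.card V := by
    have e1 : Arc E ≃ (Σ v : V, {w : V // E.Adj v w}) :=
      Equiv.subtypeProdEquivSigmaSubtype _
    rw [Fintype.card_congr e1, Fintype.card_sigma]
    have hv : ∀ v : V, Fintype.card {w : V // E.Adj v w} = d := by
      intro v
      have h2 : Fintype.card {w : V // E.Adj v w} = (E.neighborSet v).ncard := by
        rw [← Nat.card_coe_set_eq, Nat.card_eq_fintype_card]
        rfl
      rw [h2, hreg v]
    simp [hv, Finset.sum_const, mul_comm]
  have hm : 0 < Fintype.card (Arc E) := by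
    rw [hcard]
    exact Nat.mul_pos hd Fintype.card_pos
  have hL31 : 31 ≤ 31 * Fintype.card (Arc E) := by omega
  have htL : tfun E f hm (31 * Fintype.card (Arc E)) = tfun E f hm 0 := by
    rw [tfun_eq E f hm _ 0 0 hm (by omega)
        (by rw [Nat.mul_div_cancel_left _ (by omega : 0 < 31), Nat.mod_self])
        (Nat.mul_mod_right _ _),
      tfun_eq E f hm 0 0 0 hm (by omega) rfl rfl]
  have hzl : tfun E f hm (0 + 31 * Fintype.card (Arc E)) = tfun E f hm 0 := by
    rw [Nat.zero_add]; exact htL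
  have hinj : ∀ x y, x ≤ 31 * Fintype.card (Arc E) → y ≤ 31 * Fintype.card (Arc E) →
      tfun E f hm x = tfun E f hm y →
      x = y ∨ (x = 0 ∧ y = 31 * Fintype.card (Arc E)) ∨
        (x = 31 * Fintype.card (Arc E) ∧ y = 0) := by
    intro x y hx hy hxy
    rcases eq_or_lt_of_le hx with rfl | hx'
    · rcases eq_or_lt_of_le hy with rfl | hy'
      · exact Or.inl rfl
      · rw [htL] at hxy
        exact Or.inr (Or.inr ⟨rfl, (tfun_inj E f hm _ y (by omega) hy' hxy).symm⟩)
    · rcases eq_or_lt_of_le hy with rfl | hy'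
      · rw [htL] at hxy
        exact Or.inr (Or.inl ⟨tfun_inj E f hm x _ hx' (by omega) hxy, rfl⟩)
      · exact Or.inl (tfun_inj E f hm x y hx' hy' hxy)
  refine ⟨tfun E f hm 0,
    (walkSeg (GE E f) (tfun E f hm) 0 (31 * Fintype.card (Arc E))
      (fun k _ _ => tfun_adj E f hm k)).copy rfl hzl, ?_, ?_, ?_, ?_⟩
  · -- IsCycle
    rw [SimpleGraph.Walk.isCycle_def]
    refine ⟨?_, ?_, ?_⟩
    · -- IsTrail
      rw [SimpleGraph.Walk.isTrail_def, SimpleGraph.Walk.edges_copy, walkSeg_edges]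
      refine List.Nodup.map_on ?_ List.nodup_range
      intro i hi j hj hij
      rw [List.mem_range] at hi hj
      rw [Sym2.eq_iff] at hij
      rcases hij with ⟨h1, h2⟩ | ⟨h1, h2⟩
      · simp only [Nat.zero_add] at h1
        rcases hinj i j (by omega) (by omega) h1 with h | ⟨h1', h2'⟩ | ⟨h1', h2'⟩ <;> omega
      · simp only [Nat.zero_add] at h1 h2
        rcases hinj i (j + 1) (by omega) (by omega) h1 with h | ⟨h1', h2'⟩ | ⟨h1', h2'⟩ <;>
          rcases hinj (i + 1) j (by omega) (by omega) h2 with h'' | ⟨h3, h4⟩ | ⟨h3, h4⟩ <;>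
          omega
    · -- nonempty
      intro hnil
      have hh := congrArg SimpleGraph.Walk.length hnil
      rw [SimpleGraph.Walk.length_copy, walkSeg_length] at hh
      simp only [SimpleGraph.Walk.length_nil] at hh
      omega
    · -- support tail nodup
      rw [SimpleGraph.Walk.support_copy, walkSeg_support, List.range_succ_eq_map,
        List.map_cons, List.tail_cons, List.map_map]
      refine List.Nodup.map_on ?_ List.nodup_range
      intro i hi j hj hij
      rw [List.mem_range] at hi hj
      simp only [Function.comp, Nat.zero_add, Nat.succ_eq_add_one] at hij
      rcases hinj (i + 1) (j + 1) (by omega) (by omega) hij with h | ⟨h1, h2⟩ | ⟨h1, h2⟩ <;> omega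
  · -- length
    rw [SimpleGraph.Walk.length_copy, walkSeg_length, hcard]
    ring
  · -- getVert values
    intro i j hj
    have hij : 31 * (i : ℕ) + j < 31 * Fintype.card (Arc E) := by
      have := i.isLt
      omega
    rw [getVert_copy', walkSeg_getVert _ _ _ _ _ (by omega), Nat.zero_add,
      tfun_eq E f hm _ (i : ℕ) j i.isLt hj
        (by rw [(by omega : (31 * (i : ℕ) + j) / 31 = (i : ℕ))]
            exact Nat.mod_eq_of_lt i.isLt)
        (by omega),
      aV_eq (f.symm i) (j + 1) j hj (by omega)]
  · -- support characterization
    intro y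
    rw [SimpleGraph.Walk.support_copy, walkSeg_support]
    simp only [List.mem_map, List.mem_range]
    constructor
    · rintro ⟨i, _, rfl⟩
      exact ⟨_, rfl⟩
    · rintro ⟨⟨e, jf⟩, rfl⟩
      refine ⟨31 * (f e : ℕ) + (jf : ℕ), ?_, ?_⟩
      · have := (f e).isLt
        have := jf.isLt
        omega
      · rw [Nat.zero_add,
          tfun_eq E f hm _ (f e : ℕ) (jf : ℕ) (f e).isLt jf.isLt
            (by rw [(by omega : (31 * ((f e) : ℕ) + (jf : ℕ)) / 31 = ((f e) : ℕ))]
                exact Nat.mod_eq_of_lt (f e).isLt)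
            (by have := jf.isLt; omega)]
        simp
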